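/- arXiv:2601.05610 — 2 statements merged into one kernel-verified Lean document; each statement's English description precedes it below -/
import Mathlib

section
/- Let T be a linear operator that is bounded from E₀ to F₀ with norm M₀ and from E₁ to F₁ with norm M₁, where (E₀,E₁) and (F₀,F₁) are compatible couples of Banach spaces. Then for each 0 < θ < 1, T is bounded from the complex interpolation space [E₀,E₁]_θ to [F₀,F₁]_θ with norm at most M₀^{1-θ} M₁^θ. -/
open Complex

/-- The closed unit strip 0 ≤ Re z ≤ 1. -/
def interpStrip : Set ℂ := {z : ℂ | 0 ≤ z.re ∧ z.re ≤ 1}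

/-- The open unit strip 0 < Re z < 1. -/
def interpStripInt : Set ℂ := {z : ℂ | 0 < z.re ∧ z.re < 1}

/-- For a compatible Banach couple (E₀, E₁) given by continuous linear inclusions
    j₀ : E₀ → V, j₁ : E₁ → V into an ambient space V, `interpBound j₀ j₁ θ x r` says that
    x belongs to the complex interpolation space [E₀,E₁]_θ with norm ≤ r: there is a
    bounded analytic family f on the strip with f(θ) = x, whose boundary values on
    Re z = 0 (resp. Re z = 1) lie in E₀ (resp. E₁) with norms ≤ r. -/
def interpBound {V E₀ E₁ : Type*} [NormedAddCommGroup V] [NormedSpace ℂ V]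
    [NormedAddCommGroup E₀] [NormedSpace ℂ E₀] [NormedAddCommGroup E₁] [NormedSpace ℂ E₁]
    (j₀ : E₀ →L[ℂ] V) (j₁ : E₁ →L[ℂ] V) (θ : ℝ) (x : V) (r : ℝ) : Prop :=
  ∃ f : ℂ → V,
    (∀ z ∈ interpStripInt, DifferentiableAt ℂ f z) ∧
    ContinuousOn f interpStrip ∧
    (∃ C : ℝ, ∀ z ∈ interpStrip, ‖f z‖ ≤ C) ∧
    f (θ : ℂ) = x ∧
    (∀ t : ℝ, ∃ a : E₀, j₀ a = f (Complex.I * t) ∧ ‖a‖ ≤ r) ∧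
    (∀ t : ℝ, ∃ b : E₁, j₁ b = f (1 + Complex.I * t) ∧ ‖b‖ ≤ r)

private lemma rpow_le_max {M s : ℝ} (hM : 0 < M) (h1 : -1 ≤ s) (h2 : s ≤ 1) :
    M ^ s ≤ max M M⁻¹ := by
  rcases le_total 1 M with h | h
  · calc M ^ s ≤ M ^ (1:ℝ) := Real.rpow_le_rpow_of_exponent_le h h2
    _ = M := Real.rpow_one M
    _ ≤ max M M⁻¹ := le_max_left _ _
  · calc M ^ s ≤ M ^ (-1:ℝ) := Real.rpow_le_rpow_of_exponent_ge hM h h1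
    _ = M⁻¹ := by rw [Real.rpow_neg_one]
    _ ≤ max M M⁻¹ := le_max_right _ _

/-- Interpolation of operators: if T maps E₀ → F₀ with norm ≤ M₀ and E₁ → F₁ with norm
    ≤ M₁ (the couples being compatible via ambient spaces V, W), then for 0 < θ < 1,
    T maps [E₀,E₁]_θ → [F₀,F₁]_θ with norm ≤ M₀^{1-θ} M₁^θ: if x has interpolation
    norm ≤ r, then T x has interpolation norm ≤ M₀^{1-θ} M₁^θ r. -/
theorem stmt_14 {V W E₀ E₁ F₀ F₁ : Type*}
    [NormedAddCommGroup V] [NormedSpace ℂ V] [NormedAddCommGroup W] [NormedSpace ℂ W]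
    [NormedAddCommGroup E₀] [NormedSpace ℂ E₀] [NormedAddCommGroup E₁] [NormedSpace ℂ E₁]
    [NormedAddCommGroup F₀] [NormedSpace ℂ F₀] [NormedAddCommGroup F₁] [NormedSpace ℂ F₁]
    (j₀ : E₀ →L[ℂ] V) (j₁ : E₁ →L[ℂ] V) (k₀ : F₀ →L[ℂ] W) (k₁ : F₁ →L[ℂ] W)
    (T : V →L[ℂ] W) (M₀ M₁ : ℝ) (hM₀ : 0 < M₀) (hM₁ : 0 < M₁)
    (hT₀ : ∀ a : E₀, ∃ a' : F₀, k₀ a' = T (j₀ a) ∧ ‖a'‖ ≤ M₀ * ‖a‖)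
    (hT₁ : ∀ b : E₁, ∃ b' : F₁, k₁ b' = T (j₁ b) ∧ ‖b'‖ ≤ M₁ * ‖b‖)
    (θ : ℝ) (hθ₀ : 0 < θ) (hθ₁ : θ < 1)
    (x : V) (r : ℝ) (hx : interpBound j₀ j₁ θ x r) :
    interpBound k₀ k₁ θ (T x) (M₀ ^ (1 - θ) * M₁ ^ θ * r) := by
  obtain ⟨f, hdiff, hcont, ⟨Cf, hCf⟩, hfθ, hb₀, hb₁⟩ := hx
  have hM₀c : (M₀ : ℂ) ≠ 0 := by exact_mod_cast hM₀.ne'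
  have hM₁c : (M₁ : ℂ) ≠ 0 := by exact_mod_cast hM₁.ne'
  set c : ℂ → ℂ := fun z => (M₀ : ℂ) ^ (z - θ) * (M₁ : ℂ) ^ ((θ : ℂ) - z) with hc
  have hcdiff : Differentiable ℂ c := by
    apply Differentiable.mul
    · exact (differentiable_id.sub_const _).const_cpow (Or.inl hM₀c)
    · exact ((differentiable_const _).sub differentiable_id).const_cpow (Or.inl hM₁c)
  have hcnorm : ∀ z : ℂ, ‖c z‖ = M₀ ^ (z.re - θ) * M₁ ^ (θ - z.re) := by
    intro z
    rw [hc]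
    simp only [norm_mul,
      Complex.norm_cpow_eq_rpow_re_of_pos hM₀, Complex.norm_cpow_eq_rpow_re_of_pos hM₁,
      Complex.sub_re, Complex.ofReal_re]
  refine ⟨fun z => c z • T (f z), ?_, ?_, ?_, ?_, ?_, ?_⟩
  · intro z hz
    exact (hcdiff z).smul ((T.differentiableAt).comp z (hdiff z hz))
  · exact (hcdiff.continuous.continuousOn).smul (T.continuous.comp_continuousOn hcont)
  · refine ⟨(max M₀ M₀⁻¹ * max M₁ M₁⁻¹) * (‖T‖ * max Cf 0), fun z hz => ?_⟩
    have h1 : ‖c z • T (f z)‖ = ‖c z‖ * ‖T (f z)‖ := norm_smul _ _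
    have h2 : ‖T (f z)‖ ≤ ‖T‖ * max Cf 0 := by
      calc ‖T (f z)‖ ≤ ‖T‖ * ‖f z‖ := T.le_opNorm _
      _ ≤ ‖T‖ * max Cf 0 :=
        mul_le_mul_of_nonneg_left (le_trans (hCf z hz) (le_max_left _ _)) (norm_nonneg _)
    obtain ⟨hz1, hz2⟩ := hz
    have e0 : M₀ ^ (z.re - θ) ≤ max M₀ M₀⁻¹ :=
      rpow_le_max hM₀ (by linarith) (by linarith)
    have e1 : M₁ ^ (θ - z.re) ≤ max M₁ M₁⁻¹ :=
      rpow_le_max hM₁ (by linarith) (by linarith)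
    have h3 : ‖c z‖ ≤ max M₀ M₀⁻¹ * max M₁ M₁⁻¹ := by
      rw [hcnorm z]
      exact mul_le_mul e0 e1 (Real.rpow_nonneg hM₁.le _)
        (le_trans (Real.rpow_nonneg hM₀.le _) e0)
    calc ‖c z • T (f z)‖ = ‖c z‖ * ‖T (f z)‖ := h1
      _ ≤ (max M₀ M₀⁻¹ * max M₁ M₁⁻¹) * (‖T‖ * max Cf 0) := by
        apply mul_le_mul h3 h2 (norm_nonneg _)
        exact le_trans (norm_nonneg (c z)) h3
  · have : c (θ : ℂ) = 1 := by
      rw [hc]; simp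
    show c (θ : ℂ) • T (f (θ : ℂ)) = T x
    rw [this, hfθ, one_smul]
  · intro t
    obtain ⟨a, ha, har⟩ := hb₀ t
    obtain ⟨a', ha', ha'r⟩ := hT₀ a
    refine ⟨c (Complex.I * t) • a', ?_, ?_⟩
    · rw [map_smul, ha', ha]
    · have hre : (Complex.I * (t : ℂ)).re = 0 := by simp
      rw [norm_smul, hcnorm, hre]
      have hr : (0:ℝ) ≤ r := le_trans (norm_nonneg a) har
      calc M₀ ^ (0 - θ) * M₁ ^ (θ - 0) * ‖a'‖
          ≤ M₀ ^ (0 - θ) * M₁ ^ (θ - 0) * (M₀ * r) := by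
            apply mul_le_mul_of_nonneg_left _ (mul_nonneg (Real.rpow_nonneg hM₀.le _)
              (Real.rpow_nonneg hM₁.le _))
            exact le_trans ha'r (mul_le_mul_of_nonneg_left har hM₀.le)
        _ = M₀ ^ (1 - θ) * M₁ ^ θ * r := by
            rw [show (1:ℝ) - θ = 0 - θ + 1 by ring, Real.rpow_add hM₀, Real.rpow_one,
              sub_zero]
            ring
  · intro t
    obtain ⟨b, hb, hbr⟩ := hb₁ t
    obtain ⟨b', hb', hb'r⟩ := hT₁ b
    refine ⟨c (1 + Complex.I * t) • b', ?_, ?_⟩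
    · rw [map_smul, hb', hb]
    · have hre : ((1 : ℂ) + Complex.I * (t : ℂ)).re = 1 := by simp
      rw [norm_smul, hcnorm, hre]
      have hr : (0:ℝ) ≤ r := le_trans (norm_nonneg b) hbr
      calc M₀ ^ (1 - θ) * M₁ ^ (θ - 1) * ‖b'‖
          ≤ M₀ ^ (1 - θ) * M₁ ^ (θ - 1) * (M₁ * r) := by
            apply mul_le_mul_of_nonneg_left _ (mul_nonneg (Real.rpow_nonneg hM₀.le _)
              (Real.rpow_nonneg hM₁.le _))
            exact le_trans hb'r (mul_le_mul_of_nonneg_left hbr hM₁.le)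
        _ = M₀ ^ (1 - θ) * M₁ ^ θ * r := by
            rw [show θ = θ - 1 + 1 by ring, Real.rpow_add hM₁, Real.rpow_one]
            ring_nf
end

section
/- Let Ω = (0, 1/2) × (0, 1/2) and let v(x,y) = ∫₀^y ∫_{1/2}^s dt/(t ln t) ds. Let ρ(x,y) denote the distance from (x,y) to the boundary of Ω. Then √ρ · ∂²v/∂y² ∈ L²(Ω), i.e. ∫_Ω ρ(x,y) / (y ln y)² dx dy < ∞. -/
open MeasureTheory

lemma aux_G : IntegrableOn (fun y : ℝ => 1 / (y * (Real.log y) ^ 2)) (Set.Ioo (0:ℝ) (1/2)) volume := by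
  have h : IntegrableOn (fun y : ℝ => 1 / (y * (Real.log y) ^ 2)) (Set.Ioc (0:ℝ) (1/2)) volume := by
    apply intervalIntegral.integrableOn_deriv_of_nonneg
      (g := fun y : ℝ => -(Real.log y)⁻¹)
    · intro y hy
      rcases eq_or_lt_of_le hy.1 with h0 | h0
      · subst h0
        rw [← continuousWithinAt_diff_self]
        unfold ContinuousWithinAt
        have hval : ((fun y : ℝ => -(Real.log y)⁻¹) 0) = 0 := by simp
        rw [hval]
        have hlog : Filter.Tendsto Real.log (nhdsWithin (0:ℝ) (Set.Icc 0 (1/2) \ {0})) Filter.atBot := by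
          apply Real.tendsto_log_nhdsGT_zero.mono_left
          apply nhdsWithin_mono
          rintro x ⟨hx1, hx2⟩
          exact lt_of_le_of_ne hx1.1 (Ne.symm (by simpa using hx2))
        have h2 := (Filter.tendsto_neg_atBot_atTop.comp hlog).inv_tendsto_atTop
        exact h2.congr (fun y => by simp [Pi.inv_apply, Function.comp, ← neg_inv])
      · have hlog : Real.log y ≠ 0 := ne_of_lt (Real.log_neg h0 (by linarith [hy.2]))
        exact (((Real.continuousAt_log (ne_of_gt h0)).continuousWithinAt).inv₀ hlog).neg
    · intro y hy
      have hy0 : y ≠ 0 := ne_of_gt hy.1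
      have hlog : Real.log y ≠ 0 := ne_of_lt (Real.log_neg hy.1 (by linarith [hy.2]))
      have := ((Real.hasDerivAt_log hy0).inv hlog).neg
      refine this.congr_deriv ?_
      field_simp
    · intro y hy
      have h2 : 0 < y := hy.1
      positivity
  exact h.mono_set Set.Ioo_subset_Ioc_self

/-- Let Ω = (0,1/2) × (0,1/2) and v(x,y) = ∫₀^y ∫_{1/2}^s dt/(t ln t) ds, whose only
    nonzero second derivative is ∂²v/∂y² = 1/(y ln y).  With ρ the distance to ∂Ω,
    √ρ·∂²v/∂y² ∈ L²(Ω), i.e. ρ(x,y)/(y ln y)² is integrable on Ω. -/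
theorem stmt_19 :
    MeasureTheory.IntegrableOn
      (fun p : ℝ × ℝ =>
        Metric.infDist p (frontier (Set.Ioo (0:ℝ) (1/2) ×ˢ Set.Ioo (0:ℝ) (1/2)))
          / (p.2 * Real.log p.2) ^ 2)
      (Set.Ioo (0:ℝ) (1/2) ×ˢ Set.Ioo (0:ℝ) (1/2)) volume := by
  have hprod : IntegrableOn (fun p : ℝ × ℝ => 1 / (p.2 * (Real.log p.2) ^ 2))
      (Set.Ioo (0:ℝ) (1/2) ×ˢ Set.Ioo (0:ℝ) (1/2)) volume := by
    have h1 : IntegrableOn (fun _ : ℝ => (1:ℝ)) (Set.Ioo (0:ℝ) (1/2)) volume := by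
      apply integrableOn_const
      all_goals simp [Real.volume_Ioo]
    have := h1.mul_prod aux_G
    unfold IntegrableOn
    rw [Measure.volume_eq_prod, ← Measure.prod_restrict]
    simpa using this
  apply hprod.mono'
  · apply Measurable.aestronglyMeasurable
    apply Measurable.div
    · exact (Metric.continuous_infDist_pt _).measurable
    · exact ((measurable_snd.mul (Real.measurable_log.comp measurable_snd)).pow_const 2)
  · filter_upwards [ae_restrict_mem (by measurability)] with p hp
    obtain ⟨hp1, hp2⟩ := hp
    have hy0 : 0 < p.2 := hp2.1
    have hylt : p.2 < 1/2 := hp2.2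
    have hlog : Real.log p.2 < 0 := Real.log_neg hy0 (by linarith)
    have hmem : ((p.1, 0) : ℝ × ℝ) ∈ frontier (Set.Ioo (0:ℝ) (1/2) ×ˢ Set.Ioo (0:ℝ) (1/2)) := by
      rw [frontier_prod_eq]
      left
      constructor
      · exact subset_closure hp1
      · rw [frontier_Ioo (by norm_num : (0:ℝ) < 1/2)]
        simp
    have hdist : Metric.infDist p (frontier (Set.Ioo (0:ℝ) (1/2) ×ˢ Set.Ioo (0:ℝ) (1/2))) ≤ p.2 := by
      refine le_trans (Metric.infDist_le_dist_of_mem hmem) ?_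
      rw [Prod.dist_eq]
      simp [Real.dist_eq, abs_of_pos hy0, le_of_lt hy0]
    have hne : p.2 * Real.log p.2 ≠ 0 := mul_ne_zero (ne_of_gt hy0) (ne_of_lt hlog)
    have hden : (0:ℝ) < (p.2 * Real.log p.2) ^ 2 := pow_two_pos_of_ne_zero hne
    have hden2 : (0:ℝ) < p.2 * (Real.log p.2) ^ 2 :=
      mul_pos hy0 (pow_two_pos_of_ne_zero (ne_of_lt hlog))
    rw [Real.norm_eq_abs, abs_of_nonneg (div_nonneg Metric.infDist_nonneg hden.le)]
    rw [div_le_div_iff₀ hden hden2]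
    have : (p.2 * Real.log p.2) ^ 2 = p.2 * (p.2 * (Real.log p.2) ^ 2) := by ring
    nlinarith [Metric.infDist_nonneg (x := p) (s := frontier (Set.Ioo (0:ℝ) (1/2) ×ˢ Set.Ioo (0:ℝ) (1/2))), sq_nonneg (Real.log p.2), mul_pos hy0 hy0]
end
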